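/- Let H be a graph on 8 vertices with independence number at most 2. If H contains no K_4 subgraph, then every vertex of H has degree at least 4 and at most 5. -/

import Mathlib

private lemma clique_card_lt {V : Type*} {n : ℕ} {G : SimpleGraph V}
    (h : G.CliqueFree n) {s : Finset V} (hs : G.IsClique s) : s.card < n := by
  by_contra hc
  push_neg at hc
  obtain ⟨t, hts, htc⟩ := Finset.exists_subset_card_eq hc
  exact h t ⟨hs.subset (Finset.coe_subset.mpr hts), htc⟩

/-- Let H be a graph on 8 vertices with independence number at most 2
(no independent set of 3 vertices, i.e. the complement is K₃-free). If H contains no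
K₄ subgraph, then every vertex of H has degree at least 4 and at most 5. -/
theorem stmt0 (H : SimpleGraph (Fin 8)) [DecidableRel H.Adj]
    (hα : Hᶜ.CliqueFree 3) (hK4 : H.CliqueFree 4) :
    ∀ v : Fin 8, 4 ≤ H.degree v ∧ H.degree v ≤ 5 := by
  classical
  intro v
  -- complement-adjacency from non-adjacency
  have hcadj : ∀ {a b : Fin 8}, a ≠ b → ¬ H.Adj a b → Hᶜ.Adj a b := by
    intro a b hne hnadj
    exact ⟨hne, hnadj⟩
  have hdegle : H.degree v ≤ 7 := by
    have := H.degree_lt_card_verts v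
    simpa using Nat.lt_succ_iff.mp (by simpa using this)
  constructor
  · -- lower bound: non-neighbors form a clique in H
    have hclique : H.IsClique (Hᶜ.neighborFinset v : Set (Fin 8)) := by
      intro a ha b hb hab
      simp only [Finset.coe_sort_coe, Finset.mem_coe, SimpleGraph.mem_neighborFinset,
        SimpleGraph.compl_adj] at ha hb
      by_contra hnadj
      exact hα {v, a, b} (SimpleGraph.is3Clique_triple_iff.mpr
        ⟨⟨ha.1, ha.2⟩, ⟨hb.1, hb.2⟩, hcadj hab hnadj⟩)
    have hlt : Hᶜ.degree v < 4 := clique_card_lt hK4 hclique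
    have hcompl : Hᶜ.degree v = 7 - H.degree v := by
      rw [SimpleGraph.degree_compl]; simp
    omega
  · -- upper bound
    by_contra hdeg
    push_neg at hdeg
    have h6 : 6 ≤ H.degree v := hdeg
    have hne : (H.neighborFinset v).Nonempty := by
      rw [← Finset.card_pos]; unfold SimpleGraph.degree at h6; omega
    obtain ⟨u, hu⟩ := hne
    have huv : H.Adj v u := (SimpleGraph.mem_neighborFinset H v u).mp hu
    set N := (H.neighborFinset v).erase u with hN
    set A := N.filter (fun w => H.Adj u w) with hA
    set B := N.filter (fun w => ¬ H.Adj u w) with hB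
    have hmemN : ∀ w ∈ N, H.Adj v w ∧ w ≠ u := by
      intro w hw
      rw [hN, Finset.mem_erase, SimpleGraph.mem_neighborFinset] at hw
      exact ⟨hw.2, hw.1⟩
    -- A is a clique in Hᶜ
    have hAle : A.card < 3 := by
      apply clique_card_lt hα
      intro a ha b hb hab
      simp only [Finset.coe_sort_coe, Finset.mem_coe, hA, Finset.mem_filter] at ha hb
      obtain ⟨hva, hua⟩ := hmemN a ha.1
      obtain ⟨hvb, hub⟩ := hmemN b hb.1
      apply hcadj hab
      intro hadj
      exact hK4 {v, u, a, b} ⟨by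
        simp only [Finset.coe_insert, Finset.coe_singleton]
        intro x hx y hy hxy
        simp only [Set.mem_insert_iff, Set.mem_singleton_iff] at hx hy
        rcases hx with rfl|rfl|rfl|rfl <;> rcases hy with rfl|rfl|rfl|rfl <;>
          first
            | exact absurd rfl hxy
            | assumption
            | exact (huv).symm
            | exact hva.symm
            | exact hvb.symm
            | exact ha.2
            | exact hb.2
            | exact ha.2.symm
            | exact hb.2.symm
            | exact hadj.symm, by
        rw [Finset.card_insert_of_notMem, Finset.card_insert_of_notMem,
          Finset.card_insert_of_notMem, Finset.card_singleton]
        · simp [hab]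
        · simp only [Finset.mem_insert, Finset.mem_singleton]
          push_neg
          exact ⟨(H.ne_of_adj ha.2), (H.ne_of_adj hb.2)⟩
        · simp only [Finset.mem_insert, Finset.mem_singleton]
          push_neg
          exact ⟨H.ne_of_adj huv, H.ne_of_adj hva, H.ne_of_adj hvb⟩⟩
    -- insert v B is a clique in H
    have hBle : (insert v B).card < 4 := by
      apply clique_card_lt hK4
      intro a ha b hb hab
      simp only [Finset.coe_insert, Set.mem_insert_iff, Finset.mem_coe, hB,
        Finset.mem_filter] at ha hb
      rcases ha with rfl | ⟨haN, hua⟩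
      · rcases hb with rfl | ⟨hbN, hub⟩
        · exact absurd rfl hab
        · exact (hmemN b hbN).1
      · rcases hb with rfl | ⟨hbN, hub⟩
        · exact ((hmemN a haN).1).symm
        · by_contra hnadj
          exact hα {u, a, b} (SimpleGraph.is3Clique_triple_iff.mpr
            ⟨hcadj (Ne.symm (hmemN a haN).2) hua,
             hcadj (Ne.symm (hmemN b hbN).2) hub, hcadj hab hnadj⟩)
    have hvB : v ∉ B := by
      intro hvB
      rw [hB, Finset.mem_filter] at hvB
      exact H.irrefl (hmemN v hvB.1).1
    have hBcard : B.card ≤ 2 := by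
      rw [Finset.card_insert_of_notMem hvB] at hBle; omega
    have hsplit : A.card + B.card = N.card := by
      rw [hA, hB]
      exact Finset.card_filter_add_card_filter_not _
    have hNcard : N.card = H.degree v - 1 := by
      rw [hN, Finset.card_erase_of_mem hu]; rfl
    omega
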